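/- Let Γ ⊆ SL(2,ℝ) be a convex co-compact classical Schottky group. Then there exists a real s₀ > 0 such that for every s ∈ ℂ with Re s > s₀ the double family ((e^{−(s+k)·ℓ(γ)}))_{ {γ} primitive conjugacy class, k ∈ ℕ} is summable, the double product Z_Γ(s) = ∏_{{γ}} ∏_{k=0}^∞ (1 − e^{−(s+k)·ℓ(γ)}) converges, and |Z_Γ(s)| > 1/2. -/

import Mathlib

open Matrix

/-- `SL(2,ℝ)`. -/
abbrev SL2R := Matrix.SpecialLinearGroup (Fin 2) ℝ

/-- Möbius action of an element of `SL(2,ℝ)` on `ℝ`. -/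
noncomputable def mobiusR (g : SL2R) (x : ℝ) : ℝ :=
  (g 0 0 * x + g 0 1) / (g 1 0 * x + g 1 1)

/-- Möbius action of an element of `SL(2,ℝ)` on `ℂ`. -/
noncomputable def mobiusC (g : SL2R) (z : ℂ) : ℂ :=
  ((g 0 0 : ℝ) * z + (g 0 1 : ℝ)) / ((g 1 0 : ℝ) * z + (g 1 1 : ℝ))

/-- Möbius action of an element of `SL(2,ℝ)` on `ℝ ∪ {∞}`. -/
noncomputable def mobiusOP (g : SL2R) : OnePoint ℝ → OnePoint ℝ := fun p =>
  Option.elim p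
    (if g 1 0 = 0 then (OnePoint.infty : OnePoint ℝ) else ((g 0 0 / g 1 0 : ℝ) : OnePoint ℝ))
    (fun x => if g 1 0 * x + g 1 1 = 0 then (OnePoint.infty : OnePoint ℝ)
      else ((mobiusR g x : ℝ) : OnePoint ℝ))

/-- The data of a convex co-compact classical Schottky group: `2ℓ` pairwise disjoint
nonempty closed bounded intervals `I i = [a i, b i]`, indexed by `Fin l ⊕ Fin l`
(`inl i` plays the role of `I_i` and `inr i` that of `I_{ℓ+i}`), together with
generators `gen i` sending the complement in `ℝ ∪ {∞}` of the interior of `I (inl i)`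
onto `I (inr i)`. -/
structure SchottkyData (l : ℕ) where
  two_le : 2 ≤ l
  a : Fin l ⊕ Fin l → ℝ
  b : Fin l ⊕ Fin l → ℝ
  le : ∀ i, a i ≤ b i
  disjoint : Pairwise fun i j => Disjoint (Set.Icc (a i) (b i)) (Set.Icc (a j) (b j))
  gen : Fin l → SL2R
  maps_onto : ∀ i : Fin l,
    mobiusOP (gen i) '' ((fun x : ℝ => (x : OnePoint ℝ)) '' Set.Ioo (a (.inl i)) (b (.inl i)))ᶜ
      = (fun x : ℝ => (x : OnePoint ℝ)) '' Set.Icc (a (.inr i)) (b (.inr i))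

/-- The Schottky group: the subgroup of `SL(2,ℝ)` generated by `γ₁, …, γ_ℓ`
(it automatically contains the `γ_{ℓ+i} = γ_i⁻¹`). -/
def SchottkyData.group {l : ℕ} (S : SchottkyData l) : Subgroup SL2R :=
  Subgroup.closure (Set.range S.gen)

/-- The limit set: the set of real points that are accumulation points in `ℂ` of the
orbit `{γ · i : γ ∈ Γ}` of the point `i` of the upper half-plane, i.e. cluster points
of that orbit along the cofinite filter on `Γ`. -/
noncomputable def SchottkyData.limitSet {l : ℕ} (S : SchottkyData l) : Set ℝ :=
  {x : ℝ | MapClusterPt (x : ℂ) (Filter.cofinite : Filter S.group)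
    (fun γ => mobiusC (γ : SL2R) Complex.I)}

/-- The Hausdorff dimension `δ` of the limit set, as a real number. -/
noncomputable def SchottkyData.dimLimitSet {l : ℕ} (S : SchottkyData l) : ℝ :=
  (dimH S.limitSet).toReal

/-- Inverse hyperbolic cosine. -/
noncomputable def arcosh (x : ℝ) : ℝ := Real.log (x + Real.sqrt (x ^ 2 - 1))

/-- The translation length `ℓ(γ) = 2 arcosh(|tr γ|/2)` of a hyperbolic element. -/
noncomputable def transLength (g : SL2R) : ℝ :=
  2 * arcosh (|Matrix.trace (g : Matrix (Fin 2) (Fin 2) ℝ)| / 2)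

/-- An element of a group is primitive if it is nontrivial and not a proper power. -/
def IsPrimitiveElt {G : Type*} [Monoid G] (γ : G) : Prop :=
  γ ≠ 1 ∧ ∀ (β : G) (k : ℕ), 2 ≤ k → γ ≠ β ^ k

/-- A choice of representative of a conjugacy class. -/
noncomputable def ConjClasses.rep {G : Type*} [Monoid G] (c : ConjClasses G) : G :=
  (ConjClasses.exists_rep c).choose

/-- The conjugacy classes of primitive elements of the Schottky group. -/
def SchottkyData.PrimClasses {l : ℕ} (S : SchottkyData l) : Type _ :=
  {c : ConjClasses S.group // IsPrimitiveElt c.rep}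

/-- The factor `1 - e^{-(s+k) ℓ(γ)}` of the Selberg zeta function, for a conjugacy
class `{γ}` of primitive elements and `k ∈ ℕ`. -/
noncomputable def SchottkyData.zetaFactor {l : ℕ} (S : SchottkyData l) (s : ℂ)
    (c : S.PrimClasses) (k : ℕ) : ℂ :=
  1 - Complex.exp (-(s + (k : ℂ)) * (transLength ((c.1.rep : S.group) : SL2R) : ℂ))

/-- The Selberg zeta function `Z_Γ(s) = ∏_{{γ}} ∏_{k=0}^∞ (1 - e^{-(s+k) ℓ(γ)})` of the
Schottky group, as a double infinite product (`tprod`). -/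
noncomputable def SchottkyData.selbergZeta {l : ℕ} (S : SchottkyData l) (s : ℂ) : ℂ :=
  ∏' c : S.PrimClasses, ∏' k : ℕ, S.zetaFactor s c k


namespace SchAux

def denom (g : SL2R) (x : ℝ) : ℝ := g 1 0 * x + g 1 1

lemma mobiusR_eq (g : SL2R) (x : ℝ) :
    mobiusR g x = (g 0 0 * x + g 0 1) / denom g x := rfl

lemma det2 (g : SL2R) : g 0 0 * g 1 1 - g 0 1 * g 1 0 = 1 := by
  have := g.2; rwa [Matrix.det_fin_two] at this

lemma mul_entry (g h : SL2R) (i j : Fin 2) :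
    (g * h) i j = g i 0 * h 0 j + g i 1 * h 1 j := by
  simp [Matrix.SpecialLinearGroup.coe_mul, Matrix.mul_apply, Fin.sum_univ_two]

lemma inv_entries (g : SL2R) :
    g⁻¹ 0 0 = g 1 1 ∧ g⁻¹ 0 1 = -(g 0 1) ∧ g⁻¹ 1 0 = -(g 1 0) ∧ g⁻¹ 1 1 = g 0 0 := by
  rw [Matrix.SpecialLinearGroup.SL2_inv_expl]
  refine ⟨rfl, rfl, rfl, rfl⟩

lemma denom_mul (g h : SL2R) (x : ℝ) (hh : denom h x ≠ 0) :
    denom (g * h) x = denom h x * denom g (mobiusR h x) := by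
  simp only [denom, mobiusR_eq, mul_entry, denom] at *
  field_simp
  ring

lemma numer_mul (g h : SL2R) (x : ℝ) (hh : denom h x ≠ 0) :
    (g * h) 0 0 * x + (g * h) 0 1 = denom h x * (g 0 0 * mobiusR h x + g 0 1) := by
  simp only [denom, mobiusR_eq, mul_entry, denom] at *
  field_simp
  ring

lemma mobiusR_mul (g h : SL2R) (x : ℝ) (hh : denom h x ≠ 0)
    (hg : denom g (mobiusR h x) ≠ 0) :
    mobiusR (g * h) x = mobiusR g (mobiusR h x) := by
  rw [mobiusR_eq (g*h), denom_mul g h x hh, numer_mul g h x hh,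
    mul_div_mul_left _ _ hh, mobiusR_eq g]

lemma mobiusR_sub (g : SL2R) (x y : ℝ) (hx : denom g x ≠ 0) (hy : denom g y ≠ 0) :
    mobiusR g x - mobiusR g y = (x - y) / (denom g x * denom g y) := by
  have hdet := det2 g
  rw [mobiusR_eq, mobiusR_eq]
  rw [div_sub_div _ _ hx hy, div_eq_div_iff (mul_ne_zero hx hy) (mul_ne_zero hx hy)]
  simp only [denom] at *
  linear_combination (x - y) * hdet * (g 1 0 * x + g 1 1) * (g 1 0 * y + g 1 1)

lemma mobiusR_inj (g : SL2R) (x y : ℝ) (hx : denom g x ≠ 0) (hy : denom g y ≠ 0)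
    (hxy : mobiusR g x = mobiusR g y) : x = y := by
  have := mobiusR_sub g x y hx hy
  rw [hxy, sub_self] at this
  have h0 := (div_eq_zero_iff.mp this.symm).resolve_right (mul_ne_zero hx hy)
  linarith

lemma denom_inv_apply (g : SL2R) (x : ℝ) (hx : denom g x ≠ 0) :
    denom g⁻¹ (mobiusR g x) = (denom g x)⁻¹ := by
  obtain ⟨h00, h01, h10, h11⟩ := inv_entries g
  have hdet := det2 g
  simp only [denom, mobiusR_eq, denom] at *
  rw [h10, h11]
  field_simp
  linear_combination hdet

lemma mobiusR_one (x : ℝ) : mobiusR 1 x = x := by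
  have h1 : ((1 : SL2R) : Matrix (Fin 2) (Fin 2) ℝ) = 1 := Matrix.SpecialLinearGroup.coe_one
  simp [mobiusR, h1, Matrix.one_apply]

lemma mobiusR_inv_apply (g : SL2R) (x : ℝ) (hx : denom g x ≠ 0) :
    mobiusR g⁻¹ (mobiusR g x) = x := by
  have hd : denom g⁻¹ (mobiusR g x) ≠ 0 := by
    rw [denom_inv_apply g x hx]; exact inv_ne_zero hx
  rw [← mobiusR_mul g⁻¹ g x hx hd, inv_mul_cancel, mobiusR_one]

lemma denom_inv_ne (g : SL2R) (x : ℝ) (hx : denom g x ≠ 0) :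
    denom g⁻¹ (mobiusR g x) ≠ 0 := by
  rw [denom_inv_apply g x hx]; exact inv_ne_zero hx

lemma trace_eq (g : SL2R) :
    Matrix.trace (g : Matrix (Fin 2) (Fin 2) ℝ) = g 0 0 + g 1 1 := by
  rw [Matrix.trace_fin_two]

lemma trace_isConj {γ δ : SL2R} (h : IsConj γ δ) :
    Matrix.trace (δ : Matrix (Fin 2) (Fin 2) ℝ) = Matrix.trace (γ : Matrix (Fin 2) (Fin 2) ℝ) := by
  obtain ⟨u, hu⟩ := isConj_iff.mp h
  subst hu
  have : ((u * γ * u⁻¹ : SL2R) : Matrix (Fin 2) (Fin 2) ℝ)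
      = (u : Matrix (Fin 2) (Fin 2) ℝ) * γ * (u⁻¹ : SL2R) := by
    simp
  rw [this, Matrix.trace_mul_comm]
  have h1 : ((u⁻¹ : SL2R) : Matrix (Fin 2) (Fin 2) ℝ) * (u : Matrix (Fin 2) (Fin 2) ℝ) = 1 := by
    have h2 : ((u⁻¹ * u : SL2R) : Matrix (Fin 2) (Fin 2) ℝ)
        = ((1 : SL2R) : Matrix (Fin 2) (Fin 2) ℝ) := by rw [inv_mul_cancel]
    rw [Matrix.SpecialLinearGroup.coe_mul] at h2
    rw [h2, Matrix.SpecialLinearGroup.coe_one]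
  rw [← mul_assoc, h1, one_mul]

end SchAux
namespace SchAux
open Set

lemma mobiusOP_coe (g : SL2R) (x : ℝ) :
    mobiusOP g (x : OnePoint ℝ) =
      if denom g x = 0 then OnePoint.infty else ((mobiusR g x : ℝ) : OnePoint ℝ) := rfl

lemma mobiusOP_infty (g : SL2R) :
    mobiusOP g (OnePoint.infty : OnePoint ℝ) =
      if g 1 0 = 0 then (OnePoint.infty : OnePoint ℝ) else ((g 0 0 / g 1 0 : ℝ) : OnePoint ℝ) := rfl

lemma coe_injective : Function.Injective (fun x : ℝ => (x : OnePoint ℝ)) :=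
  Option.some_injective ℝ

lemma coe_ne_infty (x : ℝ) : (x : OnePoint ℝ) ≠ OnePoint.infty :=
  OnePoint.coe_ne_infty x

variable {l : ℕ} (S : SchottkyData l)

/-- endpoints -/
local notation "A" i => S.a (Sum.inl i)
local notation "B" i => S.b (Sum.inl i)
local notation "A'" i => S.a (Sum.inr i)
local notation "B'" i => S.b (Sum.inr i)

lemma mem_dom (i : Fin l) (x : ℝ)
    (hx : x ∉ Set.Ioo (S.a (Sum.inl i)) (S.b (Sum.inl i))) :
    (x : OnePoint ℝ) ∈ ((fun x : ℝ => (x : OnePoint ℝ)) '' Set.Ioo (S.a (Sum.inl i)) (S.b (Sum.inl i)))ᶜ := by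
  rintro ⟨z, hz, hzx⟩
  exact hx (coe_injective hzx ▸ hz)

lemma infty_mem_dom (i : Fin l) :
    (OnePoint.infty : OnePoint ℝ) ∈ ((fun x : ℝ => (x : OnePoint ℝ)) '' Set.Ioo (S.a (Sum.inl i)) (S.b (Sum.inl i)))ᶜ := by
  rintro ⟨z, _, hzx⟩
  exact coe_ne_infty z hzx

lemma step_icc (i : Fin l) (x : ℝ)
    (hx : x ∉ Set.Ioo (S.a (Sum.inl i)) (S.b (Sum.inl i))) :
    denom (S.gen i) x ≠ 0 ∧
      mobiusR (S.gen i) x ∈ Set.Icc (S.a (Sum.inr i)) (S.b (Sum.inr i)) := by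
  have himg : mobiusOP (S.gen i) (x : OnePoint ℝ) ∈
      (fun x : ℝ => (x : OnePoint ℝ)) '' Set.Icc (S.a (Sum.inr i)) (S.b (Sum.inr i)) := by
    rw [← S.maps_onto i]
    exact ⟨(x : OnePoint ℝ), mem_dom S i x hx, rfl⟩
  rw [mobiusOP_coe] at himg
  by_cases hd : denom (S.gen i) x = 0
  · rw [if_pos hd] at himg
    obtain ⟨z, _, hz⟩ := himg
    exact absurd hz (coe_ne_infty z)
  · rw [if_neg hd] at himg
    obtain ⟨z, hzI, hz⟩ := himg
    exact ⟨hd, coe_injective hz ▸ hzI⟩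

lemma c_ne (i : Fin l) : (S.gen i) 1 0 ≠ 0 := by
  intro hc
  have himg : mobiusOP (S.gen i) (OnePoint.infty : OnePoint ℝ) ∈
      (fun x : ℝ => (x : OnePoint ℝ)) '' Set.Icc (S.a (Sum.inr i)) (S.b (Sum.inr i)) := by
    rw [← S.maps_onto i]
    exact ⟨_, infty_mem_dom S i, rfl⟩
  rw [mobiusOP_infty, if_pos hc] at himg
  obtain ⟨z, _, hz⟩ := himg
  exact absurd hz (coe_ne_infty z)

lemma inf_mem (i : Fin l) :
    (S.gen i) 0 0 / (S.gen i) 1 0 ∈ Set.Icc (S.a (Sum.inr i)) (S.b (Sum.inr i)) := by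
  have himg : mobiusOP (S.gen i) (OnePoint.infty : OnePoint ℝ) ∈
      (fun x : ℝ => (x : OnePoint ℝ)) '' Set.Icc (S.a (Sum.inr i)) (S.b (Sum.inr i)) := by
    rw [← S.maps_onto i]
    exact ⟨_, infty_mem_dom S i, rfl⟩
  rw [mobiusOP_infty, if_neg (c_ne S i)] at himg
  obtain ⟨z, hzI, hz⟩ := himg
  exact coe_injective hz ▸ hzI

lemma pole_mem (i : Fin l) :
    -((S.gen i) 1 1) / ((S.gen i) 1 0) ∈ Set.Ioo (S.a (Sum.inl i)) (S.b (Sum.inl i)) := by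
  set p := -((S.gen i) 1 1) / ((S.gen i) 1 0) with hp
  have hdp : denom (S.gen i) p = 0 := by
    rw [hp, denom, mul_div_assoc', mul_neg, neg_div, mul_div_cancel_left₀ _ (c_ne S i)]; ring
  by_contra hnot
  exact (step_icc S i p hnot).1 hdp

lemma lt_inl (i : Fin l) : S.a (Sum.inl i) < S.b (Sum.inl i) :=
  lt_of_le_of_lt (pole_mem S i).1.le (pole_mem S i).2

lemma denom_eq_zero_iff (i : Fin l) (x : ℝ) :
    denom (S.gen i) x = 0 ↔ x = -((S.gen i) 1 1) / ((S.gen i) 1 0) := by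
  have hc := c_ne S i
  constructor
  · intro h
    rw [denom] at h
    exact (eq_div_iff hc).mpr (by linear_combination h)
  · intro h
    rw [h, denom, mul_div_assoc', mul_neg, neg_div, mul_div_cancel_left₀ _ hc]; ring

lemma inside_maps_outside (i : Fin l) (y : ℝ)
    (hy : y ∈ Set.Ioo (S.a (Sum.inl i)) (S.b (Sum.inl i)))
    (hd : denom (S.gen i) y ≠ 0) :
    mobiusR (S.gen i) y ∉ Set.Icc (S.a (Sum.inr i)) (S.b (Sum.inr i)) := by
  intro hmem
  have himg : ((mobiusR (S.gen i) y : ℝ) : OnePoint ℝ) ∈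
      (fun x : ℝ => (x : OnePoint ℝ)) '' Set.Icc (S.a (Sum.inr i)) (S.b (Sum.inr i)) :=
    ⟨_, hmem, rfl⟩
  rw [← S.maps_onto i] at himg
  obtain ⟨q, hq, hqe⟩ := himg
  match q with
  | Option.none =>
      rw [show (Option.none : OnePoint ℝ) = OnePoint.infty from rfl, mobiusOP_infty,
        if_neg (c_ne S i)] at hqe
      have heq : (S.gen i) 0 0 / (S.gen i) 1 0 = mobiusR (S.gen i) y := coe_injective hqe
      have hdet := det2 (S.gen i)
      rw [mobiusR_eq] at heq
      have hc := c_ne S i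
      rw [div_eq_div_iff hc hd] at heq
      simp only [denom] at heq
      have : (0:ℝ) = 1 := by linear_combination hdet - heq
      norm_num at this
  | Option.some z =>
      have hz : z ∉ Set.Ioo (S.a (Sum.inl i)) (S.b (Sum.inl i)) := by
        intro hzI
        exact hq ⟨z, hzI, rfl⟩
      have hdz : denom (S.gen i) z ≠ 0 := (step_icc S i z hz).1
      rw [show ((Option.some z : OnePoint ℝ)) = ((z : ℝ) : OnePoint ℝ) from rfl,
        mobiusOP_coe, if_neg hdz] at hqe
      have heq : mobiusR (S.gen i) z = mobiusR (S.gen i) y := coe_injective hqe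
      have : z = y := mobiusR_inj _ _ _ hdz hd heq
      exact hz (this ▸ hy)

end SchAux
namespace SchAux
open Set

variable {l : ℕ} (S : SchottkyData l)

lemma continuousAt_mobiusR (g : SL2R) (x : ℝ) (hx : denom g x ≠ 0) :
    ContinuousAt (mobiusR g) x := by
  have h1 : ContinuousAt (fun y : ℝ => g 0 0 * y + g 0 1) x := by fun_prop
  have h2 : ContinuousAt (fun y : ℝ => g 1 0 * y + g 1 1) x := by fun_prop
  exact h1.div h2 hx

/-- endpoints of the domain interval are mapped to endpoints of the target interval -/
lemma endpoint_mem (i : Fin l) (e : ℝ)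
    (he : e = S.a (Sum.inl i) ∨ e = S.b (Sum.inl i)) :
    mobiusR (S.gen i) e = S.a (Sum.inr i) ∨ mobiusR (S.gen i) e = S.b (Sum.inr i) := by
  set A := S.a (Sum.inl i) with hA
  set B := S.b (Sum.inl i) with hB
  set p := -((S.gen i) 1 1) / ((S.gen i) 1 0) with hp
  have hpI : p ∈ Set.Ioo A B := pole_mem S i
  have heI : e ∉ Set.Ioo A B := by
    rcases he with h | h <;> rw [h] <;> simp
  obtain ⟨hde, heIcc⟩ := step_icc S i e heI
  -- the open interval t between e and p
  set t : Set ℝ := if e = A then Set.Ioo A p else Set.Ioo p B with ht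
  have hte : e ∈ closure t := by
    rcases he with h | h
    · rw [ht, if_pos h, h, closure_Ioo (ne_of_lt hpI.1)]
      exact ⟨le_refl _, hpI.1.le⟩
    · have : e ≠ A := by rw [h]; exact (ne_of_gt (lt_inl S i))
      rw [ht, if_neg this, h, closure_Ioo (ne_of_lt hpI.2)]
      exact ⟨hpI.2.le, le_refl _⟩
  have htsub : t ⊆ Set.Ioo A B := by
    rcases he with h | h
    · rw [ht, if_pos h]
      exact fun y hy => ⟨hy.1, lt_trans hy.2 hpI.2⟩
    · by_cases hEA : e = A
      · rw [ht, if_pos hEA]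
        exact fun y hy => ⟨hy.1, lt_trans hy.2 hpI.2⟩
      · rw [ht, if_neg hEA]
        exact fun y hy => ⟨lt_trans hpI.1 hy.1, hy.2⟩
  have htp : ∀ y ∈ t, y ≠ p := by
    rcases he with h | h
    · rw [ht, if_pos h]; exact fun y hy => ne_of_lt hy.2
    · by_cases hEA : e = A
      · rw [ht, if_pos hEA]; exact fun y hy => ne_of_lt hy.2
      · rw [ht, if_neg hEA]; exact fun y hy => ne_of_gt hy.1
  have himg : ∀ y ∈ t, mobiusR (S.gen i) y ∈ (Set.Icc (S.a (Sum.inr i)) (S.b (Sum.inr i)))ᶜ := by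
    intro y hy
    have hdy : denom (S.gen i) y ≠ 0 := by
      intro hd0
      exact htp y hy ((denom_eq_zero_iff S i y).mp hd0)
    exact inside_maps_outside S i y (htsub hy) hdy
  have hcw : ContinuousWithinAt (mobiusR (S.gen i)) t e :=
    (continuousAt_mobiusR (S.gen i) e hde).continuousWithinAt
  have hmem : mobiusR (S.gen i) e ∈ closure ((Set.Icc (S.a (Sum.inr i)) (S.b (Sum.inr i)))ᶜ) := by
    have h1 : mobiusR (S.gen i) e ∈ closure (mobiusR (S.gen i) '' t) :=
      hcw.mem_closure_image hte
    refine closure_mono ?_ h1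
    rintro _ ⟨y, hy, rfl⟩
    exact himg y hy
  rw [closure_compl, interior_Icc] at hmem
  rcases heIcc with ⟨h1, h2⟩
  by_contra hcon
  push_neg at hcon
  exact hmem ⟨lt_of_le_of_ne h1 (Ne.symm hcon.1), lt_of_le_of_ne h2 hcon.2⟩

lemma genAB_ne (i : Fin l) :
    mobiusR (S.gen i) (S.a (Sum.inl i)) ≠ mobiusR (S.gen i) (S.b (Sum.inl i)) := by
  intro h
  have hA : (S.a (Sum.inl i)) ∉ Set.Ioo (S.a (Sum.inl i)) (S.b (Sum.inl i)) := by simp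
  have hB : (S.b (Sum.inl i)) ∉ Set.Ioo (S.a (Sum.inl i)) (S.b (Sum.inl i)) := by simp
  have := mobiusR_inj _ _ _ (step_icc S i _ hA).1 (step_icc S i _ hB).1 h
  exact absurd this (ne_of_lt (lt_inl S i))

lemma lt_inr (i : Fin l) : S.a (Sum.inr i) < S.b (Sum.inr i) := by
  rcases lt_or_eq_of_le (S.le (Sum.inr i)) with h | h
  · exact h
  · exfalso
    apply genAB_ne S i
    rcases endpoint_mem S i (S.a (Sum.inl i)) (Or.inl rfl) with h1 | h1 <;>
    rcases endpoint_mem S i (S.b (Sum.inl i)) (Or.inr rfl) with h2 | h2 <;>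
    rw [h1, h2] <;> rw [h]

/-- endpoint correspondence, packaged -/
lemma endpoints_pair (i : Fin l) :
    (mobiusR (S.gen i) (S.a (Sum.inl i)) = S.a (Sum.inr i) ∧
     mobiusR (S.gen i) (S.b (Sum.inl i)) = S.b (Sum.inr i)) ∨
    (mobiusR (S.gen i) (S.a (Sum.inl i)) = S.b (Sum.inr i) ∧
     mobiusR (S.gen i) (S.b (Sum.inl i)) = S.a (Sum.inr i)) := by
  rcases endpoint_mem S i (S.a (Sum.inl i)) (Or.inl rfl) with h1 | h1 <;>
  rcases endpoint_mem S i (S.b (Sum.inl i)) (Or.inr rfl) with h2 | h2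
  · exact absurd (h1.trans h2.symm) (genAB_ne S i)
  · exact Or.inl ⟨h1, h2⟩
  · exact Or.inr ⟨h1, h2⟩
  · exact absurd (h1.trans h2.symm) (genAB_ne S i)

end SchAux
namespace SchAux
open Set

variable {l : ℕ}

abbrev Letter (l : ℕ) := Fin l × Bool

def tgt : Letter l → (Fin l ⊕ Fin l) := fun s => if s.2 then Sum.inr s.1 else Sum.inl s.1
def forb : Letter l → (Fin l ⊕ Fin l) := fun s => if s.2 then Sum.inl s.1 else Sum.inr s.1
def invL : Letter l → Letter l := fun s => (s.1, !s.2)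

def eltR (S : SchottkyData l) : Letter l → SL2R :=
  fun s => if s.2 then S.gen s.1 else (S.gen s.1)⁻¹

lemma tgt_inj : Function.Injective (tgt (l := l)) := by
  rintro ⟨i, b⟩ ⟨j, c⟩ h
  cases b <;> cases c <;> simp [tgt] at h <;> simp [h]

lemma forb_eq_tgt_invL (s : Letter l) : forb s = tgt (invL s) := by
  rcases s with ⟨i, b⟩; cases b <;> rfl

lemma invL_invL (s : Letter l) : invL (invL s) = s := by
  rcases s with ⟨i, b⟩; cases b <;> rfl

lemma invL_ne (s : Letter l) : invL s ≠ s := by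
  rcases s with ⟨i, b⟩; cases b <;> simp [invL]

lemma tgt_ne_forb (s : Letter l) : tgt s ≠ forb s := by
  rw [forb_eq_tgt_invL]
  exact fun h => invL_ne s (tgt_inj h).symm

lemma eltR_invL (S : SchottkyData l) (s : Letter l) : eltR S (invL s) = (eltR S s)⁻¹ := by
  rcases s with ⟨i, b⟩; cases b <;> simp [eltR, invL]

variable (S : SchottkyData l)

lemma lt_idx (j : Fin l ⊕ Fin l) : S.a j < S.b j := by
  rcases j with i | i
  · exact lt_inl S i
  · exact lt_inr S i

lemma sep (d j : Fin l ⊕ Fin l) (hne : d ≠ j) :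
    S.b d < S.a j ∨ S.b j < S.a d := by
  by_contra hcon
  push_neg at hcon
  have h1 : max (S.a d) (S.a j) ∈ Set.Icc (S.a d) (S.b d) :=
    ⟨le_max_left _ _, max_le (S.le d) hcon.1⟩
  have h2 : max (S.a d) (S.a j) ∈ Set.Icc (S.a j) (S.b j) :=
    ⟨le_max_right _ _, max_le hcon.2 (S.le j)⟩
  exact Set.disjoint_left.mp (S.disjoint hne) h1 h2

lemma not_mem_of_ne (d j : Fin l ⊕ Fin l) (hne : j ≠ d) (x : ℝ)
    (hx : x ∈ Set.Icc (S.a j) (S.b j)) : x ∉ Set.Icc (S.a d) (S.b d) :=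
  fun hc => Set.disjoint_left.mp (S.disjoint hne) hx hc

/-- unified one-step lemma -/
lemma letter_step (s : Letter l) (j : Fin l ⊕ Fin l) (hj : j ≠ forb s) (x : ℝ)
    (hx : x ∈ Set.Icc (S.a j) (S.b j)) :
    denom (eltR S s) x ≠ 0 ∧
      mobiusR (eltR S s) x ∈ Set.Ioo (S.a (tgt s)) (S.b (tgt s)) := by
  rcases s with ⟨i, b⟩
  cases b
  · -- inverse generator: forb = inr i, tgt = inl i
    simp only [eltR, forb, tgt, if_neg Bool.false_ne_true] at *
    set g := S.gen i with hg
    have hxout : x ∉ Set.Icc (S.a (Sum.inr i)) (S.b (Sum.inr i)) := not_mem_of_ne S _ j hj x hx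
    obtain ⟨i00, i01, i10, i11⟩ := inv_entries g
    have hc := c_ne S i
    have hd : denom g⁻¹ x ≠ 0 := by
      intro h0
      simp only [denom, i10, i11] at h0
      have : x = g 0 0 / g 1 0 := (eq_div_iff hc).mpr (by linear_combination -h0)
      exact hxout (this ▸ inf_mem S i)
    refine ⟨hd, ?_⟩
    set y := mobiusR g⁻¹ x with hy
    have hgy : mobiusR g y = x := by
      have := mobiusR_inv_apply g⁻¹ x hd
      rwa [inv_inv] at this
    have hdy : denom g y ≠ 0 := by
      have := denom_inv_ne g⁻¹ x hd
      rwa [inv_inv] at this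
    by_contra hnot
    have hyIoo : y ∉ Set.Ioo (S.a (Sum.inl i)) (S.b (Sum.inl i)) := hnot
    have := (step_icc S i y hyIoo).2
    rw [hgy] at this
    exact hxout this
  · -- generator: forb = inl i, tgt = inr i
    simp only [eltR, forb, tgt, if_pos] at *
    set g := S.gen i with hg
    have hxout : x ∉ Set.Icc (S.a (Sum.inl i)) (S.b (Sum.inl i)) := not_mem_of_ne S _ j hj x hx
    have hxIoo : x ∉ Set.Ioo (S.a (Sum.inl i)) (S.b (Sum.inl i)) :=
      fun hmem => hxout (Set.Ioo_subset_Icc_self hmem)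
    obtain ⟨hd, hIcc⟩ := step_icc S i x hxIoo
    refine ⟨hd, ?_⟩
    have hAmem : S.a (Sum.inl i) ∉ Set.Ioo (S.a (Sum.inl i)) (S.b (Sum.inl i)) := by simp
    have hBmem : S.b (Sum.inl i) ∉ Set.Ioo (S.a (Sum.inl i)) (S.b (Sum.inl i)) := by simp
    have hdA := (step_icc S i _ hAmem).1
    have hdB := (step_icc S i _ hBmem).1
    have hxA : mobiusR g x ≠ mobiusR g (S.a (Sum.inl i)) := by
      intro h
      have := mobiusR_inj _ _ _ hd hdA h
      exact hxout (by rw [this]; exact Set.left_mem_Icc.mpr (S.le _))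
    have hxB : mobiusR g x ≠ mobiusR g (S.b (Sum.inl i)) := by
      intro h
      have := mobiusR_inj _ _ _ hd hdB h
      exact hxout (by rw [this]; exact Set.right_mem_Icc.mpr (S.le _))
    rcases endpoints_pair S i with ⟨h1, h2⟩ | ⟨h1, h2⟩
    · constructor
      · exact lt_of_le_of_ne hIcc.1 (by rw [← h1]; exact (Ne.symm hxA))
      · exact lt_of_le_of_ne hIcc.2 (by rw [← h2]; exact hxB)
    · constructor
      · exact lt_of_le_of_ne hIcc.1 (by rw [← h2]; exact Ne.symm hxB)
      · exact lt_of_le_of_ne hIcc.2 (by rw [← h1]; exact hxA)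

/-- unified endpoint correspondence for letters -/
lemma letter_endpoints (s : Letter l) :
    denom (eltR S s) (S.a (forb s)) ≠ 0 ∧ denom (eltR S s) (S.b (forb s)) ≠ 0 ∧
    ((mobiusR (eltR S s) (S.a (forb s)) = S.a (tgt s) ∧
      mobiusR (eltR S s) (S.b (forb s)) = S.b (tgt s)) ∨
     (mobiusR (eltR S s) (S.a (forb s)) = S.b (tgt s) ∧
      mobiusR (eltR S s) (S.b (forb s)) = S.a (tgt s))) := by
  rcases s with ⟨i, b⟩
  cases b
  · -- inverse generator, forb = inr i, tgt = inl i
    simp only [eltR, forb, tgt, if_neg Bool.false_ne_true]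
    set g := S.gen i with hg
    have hAmem : S.a (Sum.inl i) ∉ Set.Ioo (S.a (Sum.inl i)) (S.b (Sum.inl i)) := by simp
    have hBmem : S.b (Sum.inl i) ∉ Set.Ioo (S.a (Sum.inl i)) (S.b (Sum.inl i)) := by simp
    have hdA := (step_icc S i _ hAmem).1
    have hdB := (step_icc S i _ hBmem).1
    have hinvA : mobiusR g⁻¹ (mobiusR g (S.a (Sum.inl i))) = S.a (Sum.inl i) :=
      mobiusR_inv_apply g _ hdA
    have hinvB : mobiusR g⁻¹ (mobiusR g (S.b (Sum.inl i))) = S.b (Sum.inl i) :=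
      mobiusR_inv_apply g _ hdB
    have hdinvA : denom g⁻¹ (mobiusR g (S.a (Sum.inl i))) ≠ 0 := denom_inv_ne g _ hdA
    have hdinvB : denom g⁻¹ (mobiusR g (S.b (Sum.inl i))) ≠ 0 := denom_inv_ne g _ hdB
    rcases endpoints_pair S i with ⟨h1, h2⟩ | ⟨h1, h2⟩
    · rw [h1] at hinvA hdinvA
      rw [h2] at hinvB hdinvB
      exact ⟨hdinvA, hdinvB, Or.inl ⟨hinvA, hinvB⟩⟩
    · rw [h1] at hinvA hdinvA
      rw [h2] at hinvB hdinvB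
      exact ⟨hdinvB, hdinvA, Or.inr ⟨hinvB, hinvA⟩⟩
  · simp only [eltR, forb, tgt, if_pos]
    have hAmem : S.a (Sum.inl i) ∉ Set.Ioo (S.a (Sum.inl i)) (S.b (Sum.inl i)) := by simp
    have hBmem : S.b (Sum.inl i) ∉ Set.Ioo (S.a (Sum.inl i)) (S.b (Sum.inl i)) := by simp
    exact ⟨(step_icc S i _ hAmem).1, (step_icc S i _ hBmem).1, endpoints_pair S i⟩

def Qf (j : Fin l ⊕ Fin l) (x : ℝ) : ℝ := (x - S.a j) * (S.b j - x)
def len (j : Fin l ⊕ Fin l) : ℝ := S.b j - S.a j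

lemma len_pos (j : Fin l ⊕ Fin l) : 0 < len S j := sub_pos.mpr (lt_idx S j)

lemma Qf_nonneg (j : Fin l ⊕ Fin l) (x : ℝ) (hx : x ∈ Set.Icc (S.a j) (S.b j)) :
    0 ≤ Qf S j x :=
  mul_nonneg (sub_nonneg.mpr hx.1) (sub_nonneg.mpr hx.2)

lemma Qf_pos (j : Fin l ⊕ Fin l) (x : ℝ) (hx : x ∈ Set.Ioo (S.a j) (S.b j)) :
    0 < Qf S j x :=
  mul_pos (sub_pos.mpr hx.1) (sub_pos.mpr hx.2)

/-- the exact density transformation identity -/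
lemma key1 (s : Letter l) (x : ℝ) (hx : denom (eltR S s) x ≠ 0) :
    |Qf S (tgt s) (mobiusR (eltR S s) x)| * len S (forb s) * (denom (eltR S s) x)^2
      = |x - S.a (forb s)| * |x - S.b (forb s)| * len S (tgt s) := by
  obtain ⟨hdA, hdB, hpair⟩ := letter_endpoints S s
  set g := eltR S s with hgdef
  set A := S.a (forb s) with hAdef
  set B := S.b (forb s) with hBdef
  have habsQ : |Qf S (tgt s) (mobiusR g x)| =
      |mobiusR g x - S.a (tgt s)| * |S.b (tgt s) - mobiusR g x| := by
    rw [Qf, abs_mul]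
  have hlen_t : 0 < len S (tgt s) := len_pos S _
  have hlen_d : 0 < len S (forb s) := len_pos S _
  rcases hpair with ⟨h1, h2⟩ | ⟨h1, h2⟩
  · have e1 : |mobiusR g x - S.a (tgt s)| = |x - A| / (|denom g x| * |denom g A|) := by
      rw [← h1, mobiusR_sub g x A hx hdA, abs_div, abs_mul]
    have e2 : |S.b (tgt s) - mobiusR g x| = |B - x| / (|denom g B| * |denom g x|) := by
      rw [← h2, mobiusR_sub g B x hdB hx, abs_div, abs_mul]
    have e3 : len S (tgt s) = len S (forb s) / (|denom g B| * |denom g A|) := by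
      have : len S (tgt s) = (B - A) / (denom g B * denom g A) := by
        rw [len, ← h1, ← h2, mobiusR_sub g B A hdB hdA]
      have h4 : |len S (tgt s)| = |B - A| / (|denom g B| * |denom g A|) := by
        rw [this, abs_div, abs_mul]
      rw [abs_of_pos hlen_t] at h4
      rw [h4, abs_of_pos (show (0:ℝ) < B - A from hlen_d)]
      exact rfl
    rw [habsQ, e1, e2, e3, abs_sub_comm B x]
    have h5 : |denom g x| ≠ 0 := abs_ne_zero.mpr hx
    have h6 : |denom g A| ≠ 0 := abs_ne_zero.mpr hdA
    have h7 : |denom g B| ≠ 0 := abs_ne_zero.mpr hdB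
    field_simp
    rw [← sq_abs (denom g x)]
    ring
  · have e1 : |mobiusR g x - S.a (tgt s)| = |x - B| / (|denom g x| * |denom g B|) := by
      rw [← h2, mobiusR_sub g x B hx hdB, abs_div, abs_mul]
    have e2 : |S.b (tgt s) - mobiusR g x| = |A - x| / (|denom g A| * |denom g x|) := by
      rw [← h1, mobiusR_sub g A x hdA hx, abs_div, abs_mul]
    have e3 : len S (tgt s) = len S (forb s) / (|denom g A| * |denom g B|) := by
      have : len S (tgt s) = (A - B) / (denom g A * denom g B) := by
        rw [len, ← h1, ← h2, mobiusR_sub g A B hdA hdB]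
      have h4 : |len S (tgt s)| = |A - B| / (|denom g A| * |denom g B|) := by
        rw [this, abs_div, abs_mul]
      rw [abs_of_pos hlen_t, abs_sub_comm] at h4
      rw [h4, abs_of_pos (show (0:ℝ) < B - A from hlen_d)]
      exact rfl
    rw [habsQ, e1, e2, e3, abs_sub_comm A x]
    have h5 : |denom g x| ≠ 0 := abs_ne_zero.mpr hx
    have h6 : |denom g A| ≠ 0 := abs_ne_zero.mpr hdA
    have h7 : |denom g B| ≠ 0 := abs_ne_zero.mpr hdB
    field_simp
    rw [← sq_abs (denom g x)]
    ring

/-- pointwise strict density comparison -/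
lemma ptwise (d j : Fin l ⊕ Fin l) (hne : d ≠ j) (x : ℝ)
    (hx : x ∈ Set.Icc (S.a j) (S.b j)) :
    Qf S j x * len S d < |x - S.a d| * |x - S.b d| * len S j := by
  have hu : 0 ≤ x - S.a j := sub_nonneg.mpr hx.1
  have hv : 0 ≤ S.b j - x := sub_nonneg.mpr hx.2
  have hz : 0 < S.b d - S.a d := sub_pos.mpr (lt_idx S d)
  have hlj : 0 < S.b j - S.a j := sub_pos.mpr (lt_idx S j)
  rw [Qf, len, len]
  rcases sep S d j hne with hgap | hgap
  · have h1 : 0 < x - S.b d := by linarith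
    have h2 : 0 < x - S.a d := by linarith
    rw [abs_of_pos h2, abs_of_pos h1]
    have hgap' : 0 < S.a j - S.b d := by linarith
    have hP : 0 < (x - S.b d) * (S.b j - S.a j) - (x - S.a j) * (S.b j - x) := by
      nlinarith [sq_nonneg (x - S.a j), mul_pos hgap' hlj]
    nlinarith [mul_pos hP h2, mul_nonneg (mul_nonneg hu hv) h1.le]
  · have h1 : 0 < S.a d - x := by linarith
    have h2 : 0 < S.b d - x := by linarith
    rw [abs_of_neg (by linarith : x - S.a d < 0), abs_of_neg (by linarith : x - S.b d < 0)]
    have hgap' : 0 < S.a d - S.b j := by linarith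
    have hP : 0 < (S.a d - x) * (S.b j - S.a j) - (x - S.a j) * (S.b j - x) := by
      nlinarith [sq_nonneg (S.b j - x), mul_pos hgap' hlj]
    nlinarith [mul_pos hP h2, mul_nonneg (mul_nonneg hu hv) h1.le]

end SchAux
namespace SchAux
open Set

variable {l : ℕ} (S : SchottkyData l)

lemma exists_lam : ∃ Λ : ℝ, 1/2 ≤ Λ ∧ Λ < 1 ∧ ∀ d j, d ≠ j →
    ∀ x ∈ Set.Icc (S.a j) (S.b j),
      Qf S j x * len S d ≤ Λ * (|x - S.a d| * |x - S.b d| * len S j) := by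
  have hl0 : 0 < l := lt_of_lt_of_le two_pos S.two_le
  have hpair : ∀ p : (Fin l ⊕ Fin l) × (Fin l ⊕ Fin l), ∃ L : ℝ, 1/2 ≤ L ∧ L < 1 ∧
      (p.1 ≠ p.2 → ∀ x ∈ Set.Icc (S.a p.2) (S.b p.2),
        Qf S p.2 x * len S p.1 ≤ L * (|x - S.a p.1| * |x - S.b p.1| * len S p.2)) := by
    rintro ⟨d, j⟩
    by_cases hne : d = j
    · exact ⟨1/2, le_refl _, by norm_num, fun h => absurd hne h⟩
    · have hden : ∀ x ∈ Set.Icc (S.a j) (S.b j),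
          (0:ℝ) < |x - S.a d| * |x - S.b d| * len S j := by
        intro x hx
        have hxd : x ∉ Set.Icc (S.a d) (S.b d) := not_mem_of_ne S d j (Ne.symm hne) x hx
        have ha : x ≠ S.a d := fun h => hxd (by rw [h]; exact Set.left_mem_Icc.mpr (S.le d))
        have hb : x ≠ S.b d := fun h => hxd (by rw [h]; exact Set.right_mem_Icc.mpr (S.le d))
        exact mul_pos (mul_pos (abs_pos.mpr (sub_ne_zero.mpr ha))
          (abs_pos.mpr (sub_ne_zero.mpr hb))) (len_pos S j)
      set F : ℝ → ℝ := fun x =>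
        Qf S j x * len S d / (|x - S.a d| * |x - S.b d| * len S j) with hF
      have hcont : ContinuousOn F (Set.Icc (S.a j) (S.b j)) := by
        apply ContinuousOn.div
        · apply Continuous.continuousOn
          simp only [Qf]
          fun_prop
        · apply Continuous.continuousOn
          have h1 : Continuous fun x : ℝ => |x - S.a d| := (continuous_id.sub continuous_const).abs
          have h2 : Continuous fun x : ℝ => |x - S.b d| := (continuous_id.sub continuous_const).abs
          fun_prop
        · exact fun x hx => ne_of_gt (hden x hx)
      have hnonempty : (Set.Icc (S.a j) (S.b j)).Nonempty := ⟨S.a j, Set.left_mem_Icc.mpr (S.le j)⟩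
      obtain ⟨x₀, hx₀, hmax⟩ := isCompact_Icc.exists_isMaxOn hnonempty hcont
      refine ⟨max (1/2) (F x₀), le_max_left _ _, ?_, ?_⟩
      · apply max_lt (by norm_num)
        rw [hF]
        rw [div_lt_one (hden x₀ hx₀)]
        exact ptwise S d j hne x₀ hx₀
      · intro _ x hx
        have h1 : F x ≤ F x₀ := hmax hx
        have h2 : Qf S j x * len S d = F x * (|x - S.a d| * |x - S.b d| * len S j) := by
          rw [hF]
          rw [div_mul_cancel₀ _ (ne_of_gt (hden x hx))]
        rw [h2]
        apply mul_le_mul_of_nonneg_right _ (hden x hx).le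
        exact le_trans h1 (le_max_right _ _)
  choose Lf hLf1 hLf2 hLf3 using hpair
  haveI : Nonempty ((Fin l ⊕ Fin l) × (Fin l ⊕ Fin l)) :=
    ⟨(Sum.inl ⟨0, hl0⟩, Sum.inl ⟨0, hl0⟩)⟩
  have hne : (Finset.univ : Finset ((Fin l ⊕ Fin l) × (Fin l ⊕ Fin l))).Nonempty :=
    Finset.univ_nonempty
  refine ⟨Finset.univ.sup' hne Lf, ?_, ?_, ?_⟩
  · exact le_trans (hLf1 (Classical.arbitrary _)) (Finset.le_sup' Lf (Finset.mem_univ _))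
  · rw [Finset.sup'_lt_iff]
    exact fun p _ => hLf2 p
  · intro d j hdj x hx
    refine le_trans (hLf3 (d, j) hdj x hx) ?_
    apply mul_le_mul_of_nonneg_right (Finset.le_sup' Lf (Finset.mem_univ (d, j)))
    have := len_pos S j
    positivity

/-- one-step density estimate -/
lemma step_density (Λ : ℝ)
    (hΛ : ∀ d j, d ≠ j → ∀ x ∈ Set.Icc (S.a j) (S.b j),
      Qf S j x * len S d ≤ Λ * (|x - S.a d| * |x - S.b d| * len S j))
    (s : Letter l) (j : Fin l ⊕ Fin l) (hj : j ≠ forb s) (x : ℝ)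
    (hx : x ∈ Set.Icc (S.a j) (S.b j)) :
    Qf S j x * len S (tgt s) ≤
      Λ * (denom (eltR S s) x)^2 * Qf S (tgt s) (mobiusR (eltR S s) x) * len S j := by
  obtain ⟨hd, hIoo⟩ := letter_step S s j hj x hx
  have hk := key1 S s x hd
  have hQt_pos : 0 < Qf S (tgt s) (mobiusR (eltR S s) x) := Qf_pos S _ _ hIoo
  have habs : |Qf S (tgt s) (mobiusR (eltR S s) x)| = Qf S (tgt s) (mobiusR (eltR S s) x) :=
    abs_of_pos hQt_pos
  have hlam := hΛ (forb s) j (Ne.symm hj) x hx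
  have h2 : (Qf S j x * len S (tgt s)) * len S (forb s) ≤
      (Λ * (denom (eltR S s) x)^2 * Qf S (tgt s) (mobiusR (eltR S s) x) * len S j) *
        len S (forb s) := by
    calc (Qf S j x * len S (tgt s)) * len S (forb s)
        = (Qf S j x * len S (forb s)) * len S (tgt s) := by ring
      _ ≤ (Λ * (|x - S.a (forb s)| * |x - S.b (forb s)| * len S j)) * len S (tgt s) :=
          mul_le_mul_of_nonneg_right hlam (len_pos S _).le
      _ = Λ * len S j * (|x - S.a (forb s)| * |x - S.b (forb s)| * len S (tgt s)) := by ring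
      _ = Λ * len S j *
          (|Qf S (tgt s) (mobiusR (eltR S s) x)| * len S (forb s) * (denom (eltR S s) x)^2) := by
          rw [hk]
      _ = (Λ * (denom (eltR S s) x)^2 * Qf S (tgt s) (mobiusR (eltR S s) x) * len S j) *
          len S (forb s) := by rw [habs]; ring
  exact le_of_mul_le_mul_right h2 (len_pos S _)

def wordProd (w : List (Letter l)) : SL2R := (w.map (eltR S)).prod

def Red (w : List (Letter l)) : Prop := w.Chain' (fun s s' => tgt s' ≠ forb s)

lemma wordProd_cons (s : Letter l) (w : List (Letter l)) :
    wordProd S (s :: w) = eltR S s * wordProd S w := by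
  simp [wordProd]

lemma pingpong (Λ : ℝ) (hΛ0 : 0 ≤ Λ)
    (hstep : ∀ (s : Letter l) (j : Fin l ⊕ Fin l), j ≠ forb s → ∀ x ∈ Set.Icc (S.a j) (S.b j),
      Qf S j x * len S (tgt s) ≤
        Λ * (denom (eltR S s) x)^2 * Qf S (tgt s) (mobiusR (eltR S s) x) * len S j) :
    ∀ (w : List (Letter l)) (hw : w ≠ []) (_ : Red w) (j : Fin l ⊕ Fin l)
      (_ : j ≠ forb (w.getLast hw)) (x : ℝ) (_ : x ∈ Set.Icc (S.a j) (S.b j)),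
      denom (wordProd S w) x ≠ 0 ∧
      mobiusR (wordProd S w) x ∈ Set.Ioo (S.a (tgt (w.head hw))) (S.b (tgt (w.head hw))) ∧
      Qf S j x * len S (tgt (w.head hw)) ≤
        Λ^(w.length) * (denom (wordProd S w) x)^2 *
          Qf S (tgt (w.head hw)) (mobiusR (wordProd S w) x) * len S j := by
  intro w
  induction w with
  | nil => intro hw; exact absurd rfl hw
  | cons s w' ih =>
    intro hw hred j hj x hx
    by_cases hw' : w' = []
    · subst hw'
      have hj1 : j ≠ forb s := hj
      have h1 := letter_step S s j hj1 x hx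
      have h2 := hstep s j hj1 x hx
      have hp : wordProd S [s] = eltR S s := by simp [wordProd]
      rw [show ([s] : List (Letter l)).head hw = s from rfl, hp]
      refine ⟨h1.1, h1.2, ?_⟩
      simpa [pow_one] using h2
    · have hlast : (s :: w').getLast hw = w'.getLast hw' := List.getLast_cons hw'
      have hred' : Red w' := hred.tail
      have hj' : j ≠ forb (w'.getLast hw') := by rw [hlast] at hj; exact hj
      obtain ⟨hd', hIoo', hq'⟩ := ih hw' hred' j hj' x hx
      have hhead : tgt (w'.head hw') ≠ forb s := by
        have hc := (List.isChain_cons.mp hred).1 (w'.head hw')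
        apply hc
        rw [List.head?_eq_head hw']
        exact Option.mem_def.mpr rfl
      set y := mobiusR (wordProd S w') x with hy
      have hymem : y ∈ Set.Icc (S.a (tgt (w'.head hw'))) (S.b (tgt (w'.head hw'))) :=
        Set.Ioo_subset_Icc_self hIoo'
      obtain ⟨hd2, hIoo2⟩ := letter_step S s (tgt (w'.head hw')) hhead y hymem
      have hdens := hstep s (tgt (w'.head hw')) hhead y hymem
      have hdm : denom (eltR S s * wordProd S w') x =
          denom (wordProd S w') x * denom (eltR S s) y := denom_mul _ _ x hd'
      have hcomp : mobiusR (eltR S s * wordProd S w') x = mobiusR (eltR S s) y :=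
        mobiusR_mul _ _ x hd' hd2
      have hheadc : (s :: w').head hw = s := rfl
      rw [hheadc, wordProd_cons, hdm, hcomp]
      refine ⟨mul_ne_zero hd' hd2, hIoo2, ?_⟩
      have hQy_pos : 0 < Qf S (tgt (w'.head hw')) y := Qf_pos S _ _ hIoo'
      have hLt'_pos : 0 < len S (tgt (w'.head hw')) := len_pos S _
      have hmul := mul_le_mul hq' hdens
        (mul_nonneg hQy_pos.le (len_pos S (tgt s)).le)
        (mul_nonneg (mul_nonneg (mul_nonneg (pow_nonneg hΛ0 _) (sq_nonneg _)) hQy_pos.le)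
          (len_pos S j).le)
      have hfin : (Qf S j x * len S (tgt s)) *
          (Qf S (tgt (w'.head hw')) y * len S (tgt (w'.head hw'))) ≤
          (Λ^((s :: w').length) * (denom (wordProd S w') x * denom (eltR S s) y)^2 *
            Qf S (tgt s) (mobiusR (eltR S s) y) * len S j) *
          (Qf S (tgt (w'.head hw')) y * len S (tgt (w'.head hw'))) := by
        calc (Qf S j x * len S (tgt s)) *
            (Qf S (tgt (w'.head hw')) y * len S (tgt (w'.head hw')))
            = (Qf S j x * len S (tgt (w'.head hw'))) *
              (Qf S (tgt (w'.head hw')) y * len S (tgt s)) := by ring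
          _ ≤ (Λ^(w'.length) * (denom (wordProd S w') x)^2 *
                Qf S (tgt (w'.head hw')) y * len S j) *
              (Λ * (denom (eltR S s) y)^2 *
                Qf S (tgt s) (mobiusR (eltR S s) y) * len S (tgt (w'.head hw'))) := hmul
          _ = (Λ^(w'.length + 1) * (denom (wordProd S w') x * denom (eltR S s) y)^2 *
                Qf S (tgt s) (mobiusR (eltR S s) y) * len S j) *
              (Qf S (tgt (w'.head hw')) y * len S (tgt (w'.head hw'))) := by
              rw [pow_succ]; ring
          _ = (Λ^((s :: w').length) * (denom (wordProd S w') x * denom (eltR S s) y)^2 *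
                Qf S (tgt s) (mobiusR (eltR S s) y) * len S j) *
              (Qf S (tgt (w'.head hw')) y * len S (tgt (w'.head hw'))) := by
              rw [List.length_cons]
      exact le_of_mul_le_mul_right hfin (mul_pos hQy_pos hLt'_pos)

end SchAux
namespace SchAux
open Set

lemma fixed_trace (g : SL2R) (p : ℝ) (hd : denom g p ≠ 0) (hfix : mobiusR g p = p) :
    g 0 0 + g 1 1 = denom g p + (denom g p)⁻¹ := by
  have hdet := det2 g
  have hfix' : g 0 0 * p + g 0 1 = p * denom g p := by
    rw [mobiusR_eq] at hfix
    exact (div_eq_iff hd).mp hfix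
  have h2 : (g 0 0 + g 1 1 - denom g p) * denom g p = 1 := by
    simp only [denom] at *
    linear_combination hdet + g 1 0 * hfix'
  have h3 : g 0 0 + g 1 1 - denom g p = (denom g p)⁻¹ := by
    field_simp
    linarith [h2]
  linarith

lemma abs_add_inv (μ : ℝ) (hμ : μ ≠ 0) : |μ + μ⁻¹| = |μ| + |μ|⁻¹ := by
  rcases lt_or_gt_of_ne hμ with h | h
  · have hinv : μ⁻¹ < 0 := inv_neg''.mpr h
    rw [abs_of_neg (by linarith), abs_of_neg h, ← neg_inv]
    ring
  · have hinv : 0 < μ⁻¹ := inv_pos.mpr h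
    rw [abs_of_pos (by linarith), abs_of_pos h]

lemma arcosh_eq (m : ℝ) (hm : 1 ≤ m) : arcosh ((m + m⁻¹) / 2) = Real.log m := by
  have hm0 : 0 < m := lt_of_lt_of_le one_pos hm
  have hminv : m⁻¹ ≤ 1 := inv_le_one_of_one_le₀ hm
  have h1 : ((m + m⁻¹) / 2) ^ 2 - 1 = ((m - m⁻¹) / 2) ^ 2 := by
    field_simp
    ring
  have h2 : (0:ℝ) ≤ (m - m⁻¹) / 2 := by
    have : m⁻¹ ≤ m := le_trans hminv hm
    linarith
  rw [arcosh, h1, Real.sqrt_sq h2]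
  have h3 : (m + m⁻¹) / 2 + (m - m⁻¹) / 2 = m := by ring
  rw [h3]

end SchAux
namespace SchAux
open Set

variable {l : ℕ} (S : SchottkyData l)

/-- translation length lower bound for cyclically reduced words -/
lemma cyc_trace (Λ : ℝ) (hΛl : 1/2 ≤ Λ) (hΛ1 : Λ < 1)
    (hstep : ∀ (s : Letter l) (j : Fin l ⊕ Fin l), j ≠ forb s → ∀ x ∈ Set.Icc (S.a j) (S.b j),
      Qf S j x * len S (tgt s) ≤
        Λ * (denom (eltR S s) x)^2 * Qf S (tgt s) (mobiusR (eltR S s) x) * len S j)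
    (w : List (Letter l)) (hw : w ≠ []) (hred : Red w)
    (hcyc : tgt (w.head hw) ≠ forb (w.getLast hw)) :
    (w.length : ℝ) * Real.log Λ⁻¹ ≤ transLength (wordProd S w) := by
  have hΛ0 : (0:ℝ) ≤ Λ := le_trans (by norm_num) hΛl
  have hΛpos : (0:ℝ) < Λ := lt_of_lt_of_le (by norm_num) hΛl
  set k := tgt (w.head hw) with hk
  set g := wordProd S w with hg
  have hpp := pingpong S Λ hΛ0 hstep w hw hred k hcyc
  have hcont : ContinuousOn (fun x => mobiusR g x - x) (Set.Icc (S.a k) (S.b k)) := by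
    intro x hx
    exact ((continuousAt_mobiusR g x (hpp x hx).1).sub continuousAt_id).continuousWithinAt
  have hA : S.a k ∈ Set.Icc (S.a k) (S.b k) := Set.left_mem_Icc.mpr (S.le k)
  have hB : S.b k ∈ Set.Icc (S.a k) (S.b k) := Set.right_mem_Icc.mpr (S.le k)
  have hfa := (hpp (S.a k) hA).2.1
  have hfb := (hpp (S.b k) hB).2.1
  have h0mem : (0:ℝ) ∈ Set.Icc (mobiusR g (S.b k) - S.b k) (mobiusR g (S.a k) - S.a k) :=
    ⟨by linarith [hfb.2], by linarith [hfa.1]⟩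
  obtain ⟨p, hp, hfp⟩ := intermediate_value_Icc' (S.le k) hcont h0mem
  have hfix : mobiusR g p = p := by
    have : mobiusR g p - p = 0 := hfp
    linarith
  obtain ⟨hdp, hpIoo, hq⟩ := hpp p hp
  rw [hfix] at hpIoo hq
  have hQp : 0 < Qf S k p := Qf_pos S k p hpIoo
  have hX : 0 < Qf S k p * len S k := mul_pos hQp (len_pos S k)
  have h1 : Qf S k p * len S k ≤ (Λ^(w.length) * (denom g p)^2) * (Qf S k p * len S k) := by
    calc Qf S k p * len S k ≤ Λ^w.length * denom g p ^2 * Qf S k p * len S k := hq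
      _ = (Λ^w.length * denom g p^2) * (Qf S k p * len S k) := by ring
  have h2 : (1:ℝ) ≤ Λ^w.length * (denom g p)^2 := (le_mul_iff_one_le_left hX).mp h1
  set μ := denom g p with hμdef
  have hμ : μ ≠ 0 := hdp
  have htr := fixed_trace g p hdp hfix
  set m := |μ| with hm
  have hm0 : 0 < m := abs_pos.mpr hμ
  have hpow : 0 < Λ^w.length := pow_pos hΛpos _
  have hD2 : (Λ^w.length)⁻¹ ≤ μ^2 := by
    rw [inv_eq_one_div, div_le_iff₀ hpow]
    nlinarith [h2]
  have hm2 : m^2 = μ^2 := by rw [hm, sq_abs]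
  have hm1 : 1 ≤ m := by
    have hs : 1 ≤ m^2 := by
      rw [hm2]
      calc (1:ℝ) ≤ (Λ^w.length)⁻¹ :=
            one_le_inv_iff₀.mpr ⟨hpow, pow_le_one₀ hΛ0 hΛ1.le⟩
        _ ≤ μ^2 := hD2
    nlinarith [abs_nonneg μ]
  have habs : |Matrix.trace (g : Matrix (Fin 2) (Fin 2) ℝ)| = m + m⁻¹ := by
    rw [trace_eq, htr, ← hμdef, abs_add_inv μ hμ]
  have harc : transLength g = 2 * Real.log m := by
    rw [transLength, habs]
    congr 1
    exact arcosh_eq m hm1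
  rw [harc]
  have hlog : Real.log ((Λ^w.length)⁻¹) ≤ Real.log (m^2) := by
    rw [Real.log_le_log_iff (by positivity) (by positivity)]
    rw [hm2]; exact hD2
  rw [Real.log_inv, Real.log_pow, Real.log_pow] at hlog
  rw [Real.log_inv]
  push_cast at hlog ⊢
  linarith

end SchAux
namespace SchAux
open Set

variable {l : ℕ} (S : SchottkyData l)

lemma eltR_mem (s : Letter l) : eltR S s ∈ S.group := by
  rcases s with ⟨i, b⟩
  cases b
  · show (if false = true then S.gen i else (S.gen i)⁻¹) ∈ S.group
    rw [if_neg (by simp)]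
    exact Subgroup.inv_mem _ (Subgroup.subset_closure ⟨i, rfl⟩)
  · show (if true = true then S.gen i else (S.gen i)⁻¹) ∈ S.group
    rw [if_pos rfl]
    exact Subgroup.subset_closure ⟨i, rfl⟩

def eltG (s : Letter l) : ↥S.group := ⟨eltR S s, eltR_mem S s⟩

def wordProdG (w : List (Letter l)) : ↥S.group := (w.map (eltG S)).prod

lemma coe_wordProdG (w : List (Letter l)) :
    ((wordProdG S w : ↥S.group) : SL2R) = wordProd S w := by
  induction w with
  | nil => simp [wordProdG, wordProd]
  | cons s w ih =>
    simp only [wordProdG, wordProd, List.map_cons, List.prod_cons] at *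
    rw [Subgroup.coe_mul]
    rw [ih]
    rfl

lemma eltG_invL (s : Letter l) : eltG S (invL s) = (eltG S s)⁻¹ := by
  apply Subtype.ext
  rw [eltG]
  show eltR S (invL s) = _
  rw [eltR_invL]
  rfl

lemma wordProd_append (u v : List (Letter l)) :
    wordProd S (u ++ v) = wordProd S u * wordProd S v := by
  simp [wordProd]

lemma wordProd_rev_inv (w : List (Letter l)) :
    wordProd S ((w.map invL).reverse) = (wordProd S w)⁻¹ := by
  induction w with
  | nil => simp [wordProd]
  | cons s w ih =>
    have h1 : ((s :: w).map invL).reverse = (w.map invL).reverse ++ [invL s] := by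
      simp
    rw [h1, wordProd_append, ih]
    have h2 : wordProd S [invL s] = (eltR S s)⁻¹ := by
      simp [wordProd, eltR_invL]
    rw [h2, wordProd_cons]
    rw [_root_.mul_inv_rev]

lemma exists_word (g : SL2R) (hg : g ∈ S.group) :
    ∃ w : List (Letter l), wordProd S w = g := by
  refine Subgroup.closure_induction ?_ ?_ ?_ ?_ hg
  · rintro x ⟨i, rfl⟩
    refine ⟨[(i, true)], ?_⟩
    simp [wordProd]
    rfl
  · exact ⟨[], by simp [wordProd]⟩
  · rintro x y _ _ ⟨wx, rfl⟩ ⟨wy, rfl⟩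
    exact ⟨wx ++ wy, wordProd_append S wx wy⟩
  · rintro x _ ⟨wx, rfl⟩
    exact ⟨(wx.map invL).reverse, wordProd_rev_inv S wx⟩

def redCons (s : Letter l) : List (Letter l) → List (Letter l)
  | [] => [s]
  | s' :: t => if s' = invL s then t else s :: s' :: t

def redW : List (Letter l) → List (Letter l)
  | [] => []
  | s :: w => redCons s (redW w)

lemma redCons_red (s : Letter l) (r : List (Letter l)) (h : Red r) : Red (redCons s r) := by
  cases r with
  | nil => exact List.isChain_singleton s
  | cons s' t =>
    rw [redCons]
    by_cases hc : s' = invL s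
    · rw [if_pos hc]
      exact h.tail
    · rw [if_neg hc]
      refine List.isChain_cons_cons.mpr ⟨?_, h⟩
      intro heq
      apply hc
      apply tgt_inj
      rw [heq, forb_eq_tgt_invL]

lemma redCons_prod (s : Letter l) (r : List (Letter l)) :
    wordProd S (redCons s r) = eltR S s * wordProd S r := by
  cases r with
  | nil => simp [redCons, wordProd]
  | cons s' t =>
    rw [redCons]
    by_cases hc : s' = invL s
    · rw [if_pos hc, hc, wordProd_cons, eltR_invL, ← mul_assoc, mul_inv_cancel, one_mul]
    · rw [if_neg hc, wordProd_cons]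

lemma redW_red (w : List (Letter l)) : Red (redW w) := by
  induction w with
  | nil => exact List.isChain_nil
  | cons s w ih => exact redCons_red s _ ih

lemma redW_prod (w : List (Letter l)) : wordProd S (redW w) = wordProd S w := by
  induction w with
  | nil => rfl
  | cons s w ih => rw [redW, redCons_prod, ih, wordProd_cons]

lemma class_word (c : ConjClasses ↥S.group) (hne1 : c ≠ ConjClasses.mk 1) :
    ∃ n : ℕ, ∃ γ : ↥S.group, ∃ w : List (Letter l), ConjClasses.mk γ = c ∧ Red w ∧ w ≠ [] ∧
      wordProdG S w = γ ∧ w.length = n := by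
  obtain ⟨γ, hγ⟩ := ConjClasses.exists_rep c
  obtain ⟨w₀, hw₀⟩ := exists_word S (γ : SL2R) γ.2
  have hprod : wordProdG S (redW w₀) = γ := by
    apply Subtype.ext
    rw [coe_wordProdG, redW_prod, hw₀]
  refine ⟨(redW w₀).length, γ, redW w₀, hγ, redW_red _, ?_, hprod, rfl⟩
  intro hnil
  apply hne1
  rw [← hγ, ← hprod, hnil]
  have : wordProdG S ([] : List (Letter l)) = 1 := rfl
  rw [this]

lemma wordProdG_decomp (s e : Letter l) (mid : List (Letter l)) :
    wordProdG S (s :: (mid ++ [e])) = eltG S s * wordProdG S mid * eltG S e := by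
  simp [wordProdG, mul_assoc]

end SchAux
namespace SchAux
open Set

variable {l : ℕ} (S : SchottkyData l)

lemma transLength_eq_of_isConj {γ δ : SL2R} (h : IsConj γ δ) :
    transLength δ = transLength γ := by
  rw [transLength, transLength, trace_isConj h]

lemma prim_class_bound (Λ : ℝ) (hΛl : 1/2 ≤ Λ) (hΛ1 : Λ < 1)
    (hstep : ∀ (s : Letter l) (j : Fin l ⊕ Fin l), j ≠ forb s → ∀ x ∈ Set.Icc (S.a j) (S.b j),
      Qf S j x * len S (tgt s) ≤
        Λ * (denom (eltR S s) x)^2 * Qf S (tgt s) (mobiusR (eltR S s) x) * len S j)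
    (c : ConjClasses ↥S.group) (hprim : IsPrimitiveElt c.rep) :
    ∃ w : List (Letter l), w ≠ [] ∧ ConjClasses.mk (wordProdG S w) = c ∧
      (w.length : ℝ) * Real.log Λ⁻¹ ≤ transLength ((c.rep : ↥S.group) : SL2R) := by
  classical
  have hrep : ConjClasses.mk c.rep = c := (ConjClasses.exists_rep c).choose_spec
  have hne1 : c ≠ ConjClasses.mk 1 := by
    intro h
    have h2 : IsConj (1 : ↥S.group) c.rep :=
      ConjClasses.mk_eq_mk_iff_isConj.mp (by rw [hrep, h])
    exact hprim.1 (isConj_one_left.mp h2.symm)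
  have hP := class_word S c hne1
  obtain ⟨γ, w, hmk, hred, hwne, hprod, hlen⟩ := Nat.find_spec hP
  have hmin := fun m (hm : m < Nat.find hP) => Nat.find_min hP hm
  -- cyclic reducedness
  have hcyc : tgt (w.head hwne) ≠ forb (w.getLast hwne) := by
    intro hviol
    have hinv : w.head hwne = invL (w.getLast hwne) := by
      apply tgt_inj
      rw [hviol, forb_eq_tgt_invL]
    cases w with
    | nil => exact hwne rfl
    | cons s w' =>
      by_cases hw' : w' = []
      · subst hw'
        have : s = invL s := hinv
        exact invL_ne s this.symm
      · obtain ⟨mid, e, hmide⟩ : ∃ mid e, w' = mid ++ [e] :=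
          ⟨w'.dropLast, w'.getLast hw', (List.dropLast_append_getLast hw').symm⟩
        subst hmide
        have hlaste : (s :: (mid ++ [e])).getLast hwne = e := by
          rw [List.getLast_cons hw']
          exact List.getLast_concat
        have hheads : (s :: (mid ++ [e])).head hwne = s := rfl
        rw [hheads, hlaste] at hinv
        -- conjugate down
        have hprodd := wordProdG_decomp S s e mid
        have hse : eltG S s = (eltG S e)⁻¹ := by rw [hinv, eltG_invL]
        have hconj : (eltG S e)⁻¹ * (wordProdG S mid) * ((eltG S e)⁻¹)⁻¹ = γ := by
          rw [inv_inv, ← hprod, hprodd, hse]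
        have hmkmid : ConjClasses.mk (wordProdG S mid) = c := by
          rw [← hmk, ConjClasses.mk_eq_mk_iff_isConj]
          exact isConj_iff.mpr ⟨(eltG S e)⁻¹, hconj⟩
        have hmidne : mid ≠ [] := by
          intro hnil
          apply hne1
          rw [← hmkmid, hnil]
          rfl
        have hmidred : Red mid := by
          have h1 : Red (mid ++ [e]) := hred.tail
          exact (List.isChain_append.mp h1).1
        have hlt : mid.length < Nat.find hP := by
          rw [← hlen]
          simp only [List.length_cons, List.length_append, List.length_singleton]
          omega
        exact hmin mid.length hlt ⟨wordProdG S mid, mid, hmkmid, hmidred, hmidne, rfl, rfl⟩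
  -- translation length bound
  have hbound := cyc_trace S Λ hΛl hΛ1 hstep w hwne hred hcyc
  have hconj : IsConj c.rep γ :=
    ConjClasses.mk_eq_mk_iff_isConj.mp (hrep.trans hmk.symm)
  have hconj2 : IsConj ((c.rep : ↥S.group) : SL2R) ((γ : ↥S.group) : SL2R) := by
    have := (S.group.subtype).map_isConj hconj
    simpa using this
  have htl : transLength ((γ : ↥S.group) : SL2R) = transLength ((c.rep : ↥S.group) : SL2R) :=
    transLength_eq_of_isConj hconj2
  refine ⟨w, hwne, hmk ▸ congrArg ConjClasses.mk hprod, ?_⟩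
  rw [← htl]
  have hcoe : ((γ : ↥S.group) : SL2R) = wordProd S w := by rw [← hprod, coe_wordProdG]
  rw [hcoe]
  exact hbound

end SchAux
namespace SchAux
open Set

lemma summable_list {α : Type*} [Fintype α] {q : ℝ} (h0 : 0 ≤ q)
    (h1 : (Fintype.card α : ℝ) * q < 1) :
    Summable (fun w : List α => q ^ w.length) := by
  rw [← (List.equivSigmaTuple (α := α)).symm.summable_iff]
  have hfun : ((fun w : List α => q ^ w.length) ∘ (List.equivSigmaTuple (α := α)).symm)
      = fun x : Σ n : ℕ, Fin n → α => q ^ x.1 := by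
    funext x
    rcases x with ⟨n, v⟩
    simp [List.equivSigmaTuple]
  rw [hfun]
  rw [summable_sigma_of_nonneg (fun x => pow_nonneg h0 _)]
  constructor
  · exact fun n => Summable.of_finite
  · have heq : (fun n : ℕ => ∑' _ : Fin n → α, q ^ n)
        = fun n : ℕ => ((Fintype.card α : ℝ) * q) ^ n := by
      funext n
      rw [tsum_const, Nat.card_eq_fintype_card, Fintype.card_fun, Fintype.card_fin,
        nsmul_eq_mul, mul_pow]
      push_cast
      ring
    rw [heq]
    have hq0 : (0:ℝ) ≤ (Fintype.card α : ℝ) * q := by positivity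
    exact summable_geometric_of_lt_one hq0 h1

lemma one_sub_ne (z : ℂ) (hb : ‖z‖ ≤ 1/2) : (1:ℂ) - z ≠ 0 := by
  intro h
  have : z = 1 := by
    have := sub_eq_zero.mp h
    exact this.symm
  rw [this, norm_one] at hb
  norm_num at hb

lemma norm_log_one_sub_le (z : ℂ) (hb : ‖z‖ ≤ 1/2) :
    ‖Complex.log (1 - z)‖ ≤ 2 * ‖z‖ := by
  have h1 : (1:ℂ) - z = 1 + (-z) := by ring
  rw [h1]
  refine le_trans (Complex.norm_log_one_add_half_le_self (by rwa [norm_neg])) ?_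
  rw [norm_neg]
  linarith [norm_nonneg z]

lemma hasProd_one_sub {ι : Type*} (f : ι → ℂ) (hs : Summable fun i => ‖f i‖)
    (hb : ∀ i, ‖f i‖ ≤ 1/2) :
    Summable (fun i => Complex.log (1 - f i)) ∧
    Summable (fun i => ‖Complex.log (1 - f i)‖) ∧
    HasProd (fun i => 1 - f i) (Complex.exp (∑' i, Complex.log (1 - f i))) ∧
    ‖∑' i, Complex.log (1 - f i)‖ ≤ 2 * ∑' i, ‖f i‖ := by
  have hlb : ∀ i, ‖Complex.log (1 - f i)‖ ≤ 2 * ‖f i‖ := fun i =>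
    norm_log_one_sub_le (f i) (hb i)
  have hsl : Summable (fun i => Complex.log (1 - f i)) :=
    Summable.of_norm_bounded (hs.mul_left 2) hlb
  have hnorm_sum : Summable (fun i => ‖Complex.log (1 - f i)‖) :=
    Summable.of_nonneg_of_le (fun _ => norm_nonneg _) hlb (hs.mul_left 2)
  refine ⟨hsl, hnorm_sum, ?_, ?_⟩
  · have htend : Filter.Tendsto
        (fun s : Finset ι => Complex.exp (∑ i ∈ s, Complex.log (1 - f i)))
        Filter.atTop (nhds (Complex.exp (∑' i, Complex.log (1 - f i)))) :=
      (Complex.continuous_exp.tendsto _).comp hsl.hasSum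
    refine htend.congr ?_
    intro s
    rw [Complex.exp_sum]
    exact Finset.prod_congr rfl fun i _ => Complex.exp_log (one_sub_ne (f i) (hb i))
  · refine le_trans (norm_tsum_le_tsum_norm hnorm_sum) ?_
    refine le_trans (Summable.tsum_le_tsum hlb hnorm_sum (hs.mul_left 2)) ?_
    rw [tsum_mul_left]

lemma hasProd_exp {ι : Type*} (L : ι → ℂ) (h : Summable L) :
    HasProd (fun i => Complex.exp (L i)) (Complex.exp (∑' i, L i)) := by
  have htend : Filter.Tendsto
      (fun s : Finset ι => Complex.exp (∑ i ∈ s, L i))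
      Filter.atTop (nhds (Complex.exp (∑' i, L i))) :=
    (Complex.continuous_exp.tendsto _).comp h.hasSum
  exact htend.congr fun s => Complex.exp_sum s L

lemma exp_sixteenth_gt : (1/2 : ℝ) < Real.exp (-(1/16)) := by
  rw [← Real.exp_log (by norm_num : (0:ℝ) < 1/2)]
  rw [Real.exp_lt_exp]
  have h2 : Real.log (1/2) = -Real.log 2 := by
    rw [one_div, Real.log_inv]
  rw [h2]
  have := Real.log_two_gt_d9
  linarith

end SchAux

set_option maxHeartbeats 2000000
open SchAux

/-- There is `s₀ > 0` such that for every `s` with `Re s > s₀` the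
double family `(e^{-(s+k) ℓ(γ)})` indexed by primitive conjugacy classes `{γ}` and `k ∈ ℕ`
is (absolutely) summable, the double product `Z_Γ(s) = ∏_{{γ}} ∏_k (1 - e^{-(s+k) ℓ(γ)})`
converges, and `|Z_Γ(s)| > 1/2`. -/
theorem schottky_zeta_large_re {l : ℕ} (S : SchottkyData l) :
    ∃ s₀ : ℝ, 0 < s₀ ∧ ∀ s : ℂ, s₀ < s.re →
      Summable (fun ck : S.PrimClasses × ℕ =>
        ‖Complex.exp (-(s + (ck.2 : ℂ)) *
          (transLength ((ck.1.1.rep : S.group) : SL2R) : ℂ))‖) ∧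
      Multipliable (fun ck : S.PrimClasses × ℕ => S.zetaFactor s ck.1 ck.2) ∧
      (∀ c : S.PrimClasses, Multipliable fun k : ℕ => S.zetaFactor s c k) ∧
      Multipliable (fun c : S.PrimClasses => ∏' k : ℕ, S.zetaFactor s c k) ∧
      1 / 2 < ‖S.selbergZeta s‖ := by
  classical
  obtain ⟨Λ, hΛl, hΛ1, hΛstep0⟩ := exists_lam S
  have hΛpos : (0:ℝ) < Λ := lt_of_lt_of_le (by norm_num) hΛl
  have hstep := step_density S Λ hΛstep0
  set m₀ := Real.log Λ⁻¹ with hm₀def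
  have hm₀ : 0 < m₀ := Real.log_pos ((one_lt_inv₀ hΛpos).mpr hΛ1)
  have hchoice : ∀ c : S.PrimClasses, ∃ w : List (Letter l), w ≠ [] ∧
      ConjClasses.mk (wordProdG S w) = c.1 ∧
      (w.length : ℝ) * m₀ ≤ transLength ((c.1.rep : ↥S.group) : SL2R) :=
    fun c => prim_class_bound S Λ hΛl hΛ1 hstep c.1 c.2
  choose W hWne hWmk hWlen using hchoice
  have hWinj : Function.Injective W := by
    intro c c' h
    apply Subtype.ext
    rw [← hWmk c, ← hWmk c', h]
  obtain ⟨ℓf, hℓdef⟩ : ∃ f : S.PrimClasses → ℝ,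
      ∀ c : S.PrimClasses, f c = transLength ((c.1.rep : ↥S.group) : SL2R) :=
    ⟨_, fun _ => rfl⟩
  have hℓ_ge : ∀ c, ((W c).length : ℝ) * m₀ ≤ ℓf c := by
    intro c
    rw [hℓdef c]
    exact hWlen c
  have hlen1 : ∀ c, (1:ℝ) ≤ ((W c).length : ℝ) := by
    intro c
    exact_mod_cast Nat.one_le_iff_ne_zero.mpr (fun h => hWne c (List.length_eq_zero_iff.mp h))
  have hℓ_pos : ∀ c, m₀ ≤ ℓf c := fun c =>
    le_trans (le_mul_of_one_le_left hm₀.le (hlen1 c)) (hℓ_ge c)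
  have hl0 : 0 < l := lt_of_lt_of_le two_pos S.two_le
  set K : ℝ := (Fintype.card (Letter l) : ℝ) with hKdef
  have hK1 : (1:ℝ) ≤ K := by
    have h : 0 < Fintype.card (Letter l) := Fintype.card_pos_iff.mpr ⟨(⟨0, hl0⟩, true)⟩
    rw [hKdef]
    exact_mod_cast h
  have hKpos : (0:ℝ) < K := lt_of_lt_of_le one_pos hK1
  set s₁ : ℝ := (Real.log K + 1) / m₀ with hs₁def
  have hlogK : 0 ≤ Real.log K := Real.log_nonneg hK1
  have hs₁pos : 0 < s₁ := div_pos (by linarith) hm₀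
  set q₀ : ℝ := Real.exp (-(s₁ * m₀)) with hq₀def
  have hq₀pos : 0 < q₀ := Real.exp_pos _
  have hs₁m₀ : s₁ * m₀ = Real.log K + 1 := by
    rw [hs₁def]; field_simp
  have hKq₀ : K * q₀ < 1 := by
    rw [hq₀def, hs₁m₀]
    have h1 : Real.exp (-(Real.log K + 1)) = K⁻¹ * Real.exp (-1) := by
      rw [neg_add, Real.exp_add, Real.exp_neg, Real.exp_log hKpos]
    rw [h1, ← mul_assoc, mul_inv_cancel₀ (ne_of_gt hKpos), one_mul]
    have h2 := Real.exp_lt_exp.mpr (show (-1:ℝ) < 0 by norm_num)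
    simpa using h2
  have hq₀sum : Summable (fun c : S.PrimClasses => q₀ ^ (W c).length) := by
    have hls := summable_list (α := Letter l) hq₀pos.le hKq₀
    exact hls.comp_injective hWinj
  set C₀ : ℝ := ∑' c : S.PrimClasses, q₀ ^ (W c).length with hC₀def
  have hC₀0 : 0 ≤ C₀ := tsum_nonneg (fun c => by positivity)
  set r : ℝ := Real.exp (-m₀) with hrdef
  have hr0 : (0:ℝ) ≤ r := (Real.exp_pos _).le
  have hr1 : r < 1 := by
    rw [hrdef]
    have := Real.exp_lt_exp.mpr (neg_lt_zero.mpr hm₀)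
    simpa using this
  have hGsum : Summable (fun k : ℕ => r ^ k) := summable_geometric_of_lt_one hr0 hr1
  set Ck : ℝ := (1 - r)⁻¹ with hCkdef
  have hCk_eq : ∑' k : ℕ, r ^ k = Ck := tsum_geometric_of_lt_one hr0 hr1
  have hCk0 : 0 ≤ Ck := by
    rw [hCkdef]
    have : (0:ℝ) < 1 - r := by linarith
    positivity
  set X : ℝ := 32 * (C₀ + 1) * (Ck + 1) with hXdef
  have hX1 : (1:ℝ) ≤ X := by nlinarith
  have hXpos : (0:ℝ) < X := lt_of_lt_of_le one_pos hX1
  have hlogX : 0 ≤ Real.log X := Real.log_nonneg hX1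
  refine ⟨s₁ + Real.log X / m₀ + 1, by positivity, ?_⟩
  intro s hs
  set σ := s.re with hσdef
  have hσs₁ : s₁ < σ := by
    have : 0 ≤ Real.log X / m₀ := by positivity
    linarith
  have hσ0 : 0 < σ := lt_trans hs₁pos hσs₁
  set u : S.PrimClasses × ℕ → ℂ := fun ck =>
    Complex.exp (-(s + (ck.2 : ℂ)) * ((ℓf ck.1 : ℝ) : ℂ)) with hudef
  have hnorm : ∀ ck : S.PrimClasses × ℕ, ‖u ck‖ = Real.exp (-((σ + ck.2) * ℓf ck.1)) := by
    intro ck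
    have h1 : ‖u ck‖ = Real.exp ((-(s + (ck.2 : ℂ)) * ((ℓf ck.1 : ℝ) : ℂ)).re) := by
      exact Complex.norm_exp _
    rw [h1]
    congr 1
    simp [Complex.mul_re, Complex.add_re, Complex.add_im, Complex.neg_re, Complex.neg_im,
      Complex.ofReal_re, Complex.ofReal_im]
    ring
  set ε : ℝ := Real.exp (-((σ - s₁) * m₀)) with hεdef
  have hεpos : 0 < ε := Real.exp_pos _
  have hbound : ∀ ck : S.PrimClasses × ℕ,
      ‖u ck‖ ≤ (ε * q₀ ^ (W ck.1).length) * r ^ ck.2 := by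
    rintro ⟨c, k⟩
    rw [hnorm]
    have h1 : Real.exp (-((σ + (k:ℝ)) * ℓf c))
        = Real.exp (-(σ * ℓf c)) * Real.exp (-((k:ℝ) * ℓf c)) := by
      rw [← Real.exp_add]; congr 1; ring
    rw [h1]
    have hq₀n : (0:ℝ) < q₀ ^ (W c).length := by positivity
    apply mul_le_mul _ _ (Real.exp_pos _).le (by positivity)
    · have h2 : Real.exp (-(σ * ℓf c))
          = Real.exp (-((σ - s₁) * ℓf c)) * Real.exp (-(s₁ * ℓf c)) := by
        rw [← Real.exp_add]; congr 1; ring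
      rw [h2]
      apply mul_le_mul _ _ (Real.exp_pos _).le hεpos.le
      · apply Real.exp_le_exp.mpr
        have h3 := mul_le_mul_of_nonneg_left (hℓ_pos c) (sub_pos.mpr hσs₁).le
        linarith
      · have h4 : q₀ ^ (W c).length = Real.exp (-(((W c).length : ℝ) * (s₁ * m₀))) := by
          rw [hq₀def, ← Real.exp_nat_mul]
          congr 1; ring
        rw [h4]
        apply Real.exp_le_exp.mpr
        have h5 := mul_le_mul_of_nonneg_left (hℓ_ge c) hs₁pos.le
        ring_nf at h5 ⊢
        linarith
    · have h6 : r ^ k = Real.exp (-((k:ℝ) * m₀)) := by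
        rw [hrdef, ← Real.exp_nat_mul]; congr 1; ring
      rw [h6]
      apply Real.exp_le_exp.mpr
      have h7 := mul_le_mul_of_nonneg_left (hℓ_pos c) (Nat.cast_nonneg (α := ℝ) k)
      linarith
  have hFsum : Summable (fun c : S.PrimClasses => ε * q₀ ^ (W c).length) := hq₀sum.mul_left ε
  have hFG : Summable (fun ck : S.PrimClasses × ℕ => (ε * q₀ ^ (W ck.1).length) * r ^ ck.2) :=
    hFsum.mul_of_nonneg hGsum (fun c => by positivity) (fun k => by positivity)
  have hT : Summable (fun ck : S.PrimClasses × ℕ => ‖u ck‖) :=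
    Summable.of_nonneg_of_le (fun _ => norm_nonneg _) hbound hFG
  set T : ℝ := ∑' ck : S.PrimClasses × ℕ, ‖u ck‖ with hTdef
  have hTle : T ≤ ε * C₀ * Ck := by
    refine le_trans (Summable.tsum_le_tsum hbound hT hFG) ?_
    have h1 : ∑' ck : S.PrimClasses × ℕ, (ε * q₀ ^ (W ck.1).length) * r ^ ck.2
        = ∑' c, ∑' k, (ε * q₀ ^ (W c).length) * r ^ k :=
      Summable.tsum_prod' hFG (fun c =>
        (show Summable fun k : ℕ => ε * q₀ ^ (W c).length * r ^ k from hGsum.mul_left _))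
    rw [h1]
    have h2 : ∀ c : S.PrimClasses, ∑' k : ℕ, (ε * q₀ ^ (W c).length) * r ^ k
        = (ε * q₀ ^ (W c).length) * Ck := by
      intro c
      rw [tsum_mul_left, hCk_eq]
    rw [tsum_congr h2]
    have h3 : ∑' c : S.PrimClasses, (ε * q₀ ^ (W c).length) * Ck
        = (∑' c : S.PrimClasses, ε * q₀ ^ (W c).length) * Ck := by
      rw [tsum_mul_right]
    rw [h3, tsum_mul_left]
  have hε_lt : ε < X⁻¹ := by
    have h2 : Real.log X < (σ - s₁) * m₀ := by
      have h3 : Real.log X / m₀ + 1 ≤ σ - s₁ := by linarith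
      have h4 : Real.log X = (Real.log X / m₀) * m₀ := by field_simp
      rw [h4]
      have h5 : Real.log X / m₀ < σ - s₁ := by linarith
      exact mul_lt_mul_of_pos_right h5 hm₀
    calc ε = Real.exp (-((σ - s₁) * m₀)) := rfl
      _ < Real.exp (-(Real.log X)) := Real.exp_lt_exp.mpr (by linarith)
      _ = X⁻¹ := by rw [Real.exp_neg, Real.exp_log hXpos]
  have hT32 : T ≤ 1/32 := by
    have h4 : ε * C₀ * Ck ≤ X⁻¹ * C₀ * Ck :=
      mul_le_mul_of_nonneg_right (mul_le_mul_of_nonneg_right hε_lt.le hC₀0) hCk0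
    have h5 : X⁻¹ * C₀ * Ck ≤ 1/32 := by
      have h6 : X⁻¹ * C₀ * Ck = C₀ * Ck / X := by ring
      rw [h6, div_le_iff₀ hXpos, hXdef]
      nlinarith [hC₀0, hCk0]
    linarith
  have hhalf : ∀ ck : S.PrimClasses × ℕ, ‖u ck‖ ≤ 1/2 := by
    intro ck
    have h := Summable.le_tsum hT ck (fun _ _ => norm_nonneg _)
    rw [← hTdef] at h
    linarith
  obtain ⟨hlogsum, hlognormsum, hHP, hlogbound⟩ := hasProd_one_sub u hT hhalf
  have hfib := fun c : S.PrimClasses =>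
    hasProd_one_sub (fun k => u (c, k)) (hT.prod_factor c) (fun k => hhalf (c, k))
  set Lc : S.PrimClasses → ℂ := fun c => ∑' k : ℕ, Complex.log (1 - u (c, k)) with hLcdef
  have hzeta_eq : ∀ (c : S.PrimClasses) (k : ℕ), S.zetaFactor s c k = 1 - u (c, k) := by
    intro c k
    simp only [SchottkyData.zetaFactor, hudef, hℓdef]
  have htpe : ∀ c : S.PrimClasses, ∏' k : ℕ, S.zetaFactor s c k = Complex.exp (Lc c) := by
    intro c
    have h := (hfib c).2.2.1
    have h2 : (fun k : ℕ => S.zetaFactor s c k) = fun k => 1 - u (c, k) :=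
      funext fun k => hzeta_eq c k
    rw [h2]
    exact h.tprod_eq
  have hgsum2 : Summable (fun c : S.PrimClasses => 2 * ∑' k : ℕ, ‖u (c, k)‖) :=
    (((summable_prod_of_nonneg (fun _ => norm_nonneg _)).mp hT).2).mul_left 2
  have hLcbound : ∀ c : S.PrimClasses, ‖Lc c‖ ≤ 2 * ∑' k : ℕ, ‖u (c, k)‖ :=
    fun c => (hfib c).2.2.2
  have hLcsum : Summable Lc :=
    Summable.of_norm_bounded hgsum2 hLcbound
  have hLcnormsum : Summable (fun c => ‖Lc c‖) :=
    Summable.of_nonneg_of_le (fun _ => norm_nonneg _) hLcbound hgsum2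
  refine ⟨?_, ?_, ?_, ?_, ?_⟩
  · -- summability of the abs family
    have h : (fun ck : S.PrimClasses × ℕ =>
        ‖Complex.exp (-(s + (ck.2 : ℂ)) *
          (transLength ((ck.1.1.rep : S.group) : SL2R) : ℂ))‖) = fun ck => ‖u ck‖ := by
      funext ck
      simp only [hudef, hℓdef]
    rw [h]
    exact hT
  · -- multipliable pair family
    refine ⟨Complex.exp (∑' ck : S.PrimClasses × ℕ, Complex.log (1 - u ck)), ?_⟩
    have h : (fun ck : S.PrimClasses × ℕ => S.zetaFactor s ck.1 ck.2)
        = fun ck => 1 - u ck := funext fun ck => hzeta_eq ck.1 ck.2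
    rw [h]
    exact hHP
  · intro c
    refine ⟨Complex.exp (Lc c), ?_⟩
    have h : (fun k : ℕ => S.zetaFactor s c k) = fun k => 1 - u (c, k) :=
      funext fun k => hzeta_eq c k
    rw [h]
    exact (hfib c).2.2.1
  · refine ⟨Complex.exp (∑' c : S.PrimClasses, Lc c), ?_⟩
    have h : (fun c : S.PrimClasses => ∏' k : ℕ, S.zetaFactor s c k)
        = fun c => Complex.exp (Lc c) := funext htpe
    rw [h]
    exact hasProd_exp Lc hLcsum
  · have hZ : S.selbergZeta s = Complex.exp (∑' c : S.PrimClasses, Lc c) := by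
      rw [SchottkyData.selbergZeta, tprod_congr htpe]
      exact (hasProd_exp Lc hLcsum).tprod_eq
    rw [hZ, Complex.norm_exp]
    have h6 : ‖∑' c : S.PrimClasses, Lc c‖ ≤ 2 * T := by
      refine le_trans (norm_tsum_le_tsum_norm hLcnormsum) ?_
      refine le_trans (Summable.tsum_le_tsum hLcbound hLcnormsum hgsum2) ?_
      rw [tsum_mul_left]
      have h7 : ∑' c : S.PrimClasses, ∑' k : ℕ, ‖u (c, k)‖ = T := by
        rw [hTdef]
        exact (Summable.tsum_prod' hT (fun c => hT.prod_factor c)).symm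
      rw [h7]
    have h8 : -(1/16 : ℝ) ≤ (∑' c : S.PrimClasses, Lc c).re := by
      have h9 : |(∑' c : S.PrimClasses, Lc c).re| ≤ ‖∑' c : S.PrimClasses, Lc c‖ := by
        exact Complex.abs_re_le_norm _
      have h10 : ‖∑' c : S.PrimClasses, Lc c‖ ≤ 1/16 := by linarith
      have h11 := abs_le.mp (le_trans h9 h10)
      linarith [h11.1]
    calc (1/2 : ℝ) < Real.exp (-(1/16)) := exp_sixteenth_gt
      _ ≤ Real.exp ((∑' c : S.PrimClasses, Lc c).re) := Real.exp_le_exp.mpr h8
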